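/- Monotonicity of isotonic regression ties under the search-collision structure: suppose y ∈ ℝ^d has y_j < y_{j+1} for all j ≠ k (so (k, k+1) is the only adjacent violation), and in the isotonic fit of y the tied block containing index k is {i*, …, j*} with i* ≤ k < j*. Define j(i) = argmin_{m ≥ i} avg(y_{i:m}) (largest minimizer). Then for i ≤ k: if i < i* then j(i) = i, and if i ≥ i* then j(i) > k. -/

import Mathlib

lemma aux_VI {d : ℕ} (y x : Fin d → ℝ)
    (hmin : ∀ v : Fin d → ℝ, Monotone v →
      ∑ i, (x i - y i)^2 ≤ ∑ i, (v i - y i)^2)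
    (v : Fin d → ℝ) (hxv : Monotone (fun t => x t + (v t - x t)))
    (hx : Monotone x) : 0 ≤ ∑ t, (x t - y t) * (v t - x t) := by
  by_contra hcon
  push_neg at hcon
  set A := ∑ t, (x t - y t) * (v t - x t) with hA
  set B := ∑ t, (v t - x t)^2 with hB
  have hBnn : (0:ℝ) ≤ B := Finset.sum_nonneg (fun t _ => sq_nonneg _)
  have hB0 : 0 < B := by
    rcases hBnn.lt_or_eq with h | h
    · exact h
    · exfalso
      have hz : ∀ t ∈ Finset.univ, (v t - x t)^2 = 0 := by
        intro t _
        have := (Finset.sum_eq_zero_iff_of_nonneg (fun t _ => sq_nonneg (v t - x t))).mp h.symm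
        exact this t (Finset.mem_univ t)
      have : A = 0 := by
        rw [hA]
        apply Finset.sum_eq_zero
        intro t ht
        have h2 : v t - x t = 0 := by
          have := hz t ht; nlinarith [this]
        rw [h2]; ring
      linarith
  set s := min 1 (-A/B) with hs
  have hs0 : 0 < s := lt_min one_pos (div_pos (by linarith) hB0)
  have hs1 : s ≤ 1 := min_le_left _ _
  have hsB : s * B ≤ -A := by
    have : s ≤ -A/B := min_le_right _ _
    calc s * B ≤ (-A/B) * B := by nlinarith
    _ = -A := by field_simp
  have hw : Monotone (fun t => x t + s * (v t - x t)) := by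
    intro a b hab
    have h1 : x a ≤ x b := hx hab
    have h2 : x a + (v a - x a) ≤ x b + (v b - x b) := hxv hab
    simp only
    nlinarith
  have hm := hmin _ hw
  have hexp : ∑ t, (x t + s*(v t - x t) - y t)^2 = ∑ t, (x t - y t)^2 + (2*s*A + s^2*B) := by
    rw [hA, hB, Finset.mul_sum, Finset.mul_sum, ← Finset.sum_add_distrib, ← Finset.sum_add_distrib]
    apply Finset.sum_congr rfl
    intro t _
    ring
  rw [hexp] at hm
  nlinarith

lemma aux_perturb {d : ℕ} (y x : Fin d → ℝ) (hx : Monotone x)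
    (hmin : ∀ v : Fin d → ℝ, Monotone v →
      ∑ i, (x i - y i)^2 ≤ ∑ i, (v i - y i)^2)
    (g : Fin d → ℝ) (ε : ℝ) (hε : 0 < ε)
    (hm : Monotone (fun t => x t + ε * g t)) :
    0 ≤ ∑ t, (x t - y t) * g t := by
  have h := aux_VI y x hmin (fun t => x t + ε * g t) (by simpa using hm) hx
  simp only [add_sub_cancel_left] at h
  have : ∑ t, (x t - y t) * (ε * g t) = ε * ∑ t, (x t - y t) * g t := by
    rw [Finset.mul_sum]; apply Finset.sum_congr rfl; intro t _; ring
  rw [this] at h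
  exact le_of_mul_le_mul_left (by linarith) hε


lemma aux_chain {d : ℕ} (y : Fin d → ℝ) (k : Fin d)
    (hstrict : ∀ (j : Fin d) (hj : (j : ℕ) + 1 < d), j ≠ k → y j < y ⟨(j : ℕ) + 1, hj⟩) :
    ∀ n : ℕ, ∀ a b : Fin d, (b : ℕ) = (a : ℕ) + n + 1 →
      ((b : ℕ) ≤ (k : ℕ) ∨ (k : ℕ) < (a : ℕ)) → y a < y b := by
  intro n
  induction n with
  | zero =>
    intro a b hb hc
    have hj : (a : ℕ) + 1 < d := by have := b.isLt; omega
    have hne : a ≠ k := by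
      intro h
      subst h
      omega
    have := hstrict a hj hne
    have hbeq : b = ⟨(a : ℕ) + 1, hj⟩ := Fin.ext (by simpa using hb)
    rwa [hbeq]
  | succ n ih =>
    intro a b hb hc
    have hlt : (a : ℕ) + n + 1 < d := by have := b.isLt; omega
    set b' : Fin d := ⟨(a : ℕ) + n + 1, hlt⟩ with hb'
    have h1 : y a < y b' := by
      apply ih a b' (by rfl) 
      rcases hc with h | h
      · left; show (a : ℕ) + n + 1 ≤ (k : ℕ); omega
      · right; exact h
    have h2 : y b' < y b := by
      have hj : (b' : ℕ) + 1 < d := by have := b.isLt; simp [hb']; omega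
      have hne : b' ≠ k := by
        intro h
        rcases hc with hc | hc
        · have : (b' : ℕ) = (k : ℕ) := by rw [h]
          simp [hb'] at this; omega
        · have : (b' : ℕ) = (k : ℕ) := by rw [h]
          simp [hb'] at this; omega
      have := hstrict b' hj hne
      have hbeq : b = ⟨(b' : ℕ) + 1, hj⟩ := Fin.ext (by simp [hb']; omega)
      rwa [hbeq]
    linarith

lemma aux_chain_le {d : ℕ} (y : Fin d → ℝ) (k : Fin d)
    (hstrict : ∀ (j : Fin d) (hj : (j : ℕ) + 1 < d), j ≠ k → y j < y ⟨(j : ℕ) + 1, hj⟩)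
    (a b : Fin d) (hab : a ≤ b) (hc : (b : ℕ) ≤ (k : ℕ) ∨ (k : ℕ) < (a : ℕ)) : y a ≤ y b := by
  rcases eq_or_lt_of_le hab with h | h
  · rw [h]
  · have hlt : (a : ℕ) < (b : ℕ) := h
    exact (aux_chain y k hstrict ((b : ℕ) - (a : ℕ) - 1) a b (by omega) hc).le

lemma aux_chain_lt {d : ℕ} (y : Fin d → ℝ) (k : Fin d)
    (hstrict : ∀ (j : Fin d) (hj : (j : ℕ) + 1 < d), j ≠ k → y j < y ⟨(j : ℕ) + 1, hj⟩)
    (a b : Fin d) (hab : a < b) (hc : (b : ℕ) ≤ (k : ℕ) ∨ (k : ℕ) < (a : ℕ)) : y a < y b := by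
  have hlt : (a : ℕ) < (b : ℕ) := hab
  exact aux_chain y k hstrict ((b : ℕ) - (a : ℕ) - 1) a b (by omega) hc


noncomputable def Spre {d : ℕ} (y x : Fin d → ℝ) (n : ℕ) : ℝ :=
  ∑ s ∈ Finset.univ.filter (fun s : Fin d => (s : ℕ) < n), (x s - y s)



lemma aux_S_nonpos {d : ℕ} (y x : Fin d → ℝ) (hx : Monotone x)
    (hmin : ∀ v : Fin d → ℝ, Monotone v →
      ∑ i, (x i - y i)^2 ≤ ∑ i, (v i - y i)^2) (n : ℕ) :
    Spre y x n ≤ 0 := by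
  have h := aux_perturb y x hx hmin (fun s => if (s : ℕ) < n then (-1 : ℝ) else 0) 1 one_pos ?_
  · have heq : ∑ t, (x t - y t) * (if (t : ℕ) < n then (-1 : ℝ) else 0) = -Spre y x n := by
      rw [Spre, Finset.sum_filter, ← Finset.sum_neg_distrib]
      apply Finset.sum_congr rfl
      intro t _
      by_cases h : (t : ℕ) < n <;> simp [h]
    rw [heq] at h
    linarith
  · intro a b hab
    have h1 : x a ≤ x b := hx hab
    have h2 : (a : ℕ) ≤ (b : ℕ) := hab
    simp only
    by_cases ha : (a : ℕ) < n <;> by_cases hb : (b : ℕ) < n <;> simp [ha, hb] <;> [linarith; linarith; omega; linarith]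

lemma aux_S_total {d : ℕ} (y x : Fin d → ℝ) (hx : Monotone x)
    (hmin : ∀ v : Fin d → ℝ, Monotone v →
      ∑ i, (x i - y i)^2 ≤ ∑ i, (v i - y i)^2) :
    Spre y x d = 0 := by
  have h := aux_perturb y x hx hmin (fun _ => (1 : ℝ)) 1 one_pos
    (by intro a b hab; simp only; have := hx hab; linarith)
  have heq : Spre y x d = ∑ t, (x t - y t) := by
    rw [Spre]
    apply Finset.sum_congr _ (fun _ _ => rfl)
    ext s
    simp [s.isLt]
  have h2 := aux_S_nonpos y x hx hmin d
  simp only [mul_one] at h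
  linarith [heq ▸ h2, h]

lemma aux_S_ascent {d : ℕ} (y x : Fin d → ℝ) (hx : Monotone x)
    (hmin : ∀ v : Fin d → ℝ, Monotone v →
      ∑ i, (x i - y i)^2 ≤ ∑ i, (v i - y i)^2)
    (a b : Fin d) (hab : (b : ℕ) = (a : ℕ) + 1) (hxab : x a < x b) :
    Spre y x b = 0 := by
  have h := aux_perturb y x hx hmin (fun s => if (s : ℕ) < (b : ℕ) then (1 : ℝ) else 0)
    (x b - x a) (by linarith) ?_
  · have heq : ∑ t, (x t - y t) * (if (t : ℕ) < (b : ℕ) then (1 : ℝ) else 0) = Spre y x b := by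
      rw [Spre, Finset.sum_filter]
      apply Finset.sum_congr rfl
      intro t _
      by_cases h : (t : ℕ) < (b : ℕ) <;> simp [h]
    rw [heq] at h
    have h2 := aux_S_nonpos y x hx hmin b
    linarith
  · intro s1 s2 h12
    have h1 : x s1 ≤ x s2 := hx h12
    have h2 : (s1 : ℕ) ≤ (s2 : ℕ) := h12
    simp only
    by_cases hs1 : (s1 : ℕ) < (b : ℕ) <;> by_cases hs2 : (s2 : ℕ) < (b : ℕ)
    · simp [hs1, hs2]; linarith
    · simp [hs1, hs2]
      have ha1 : s1 ≤ a := by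
        rw [Fin.le_def]; omega
      have hb2 : b ≤ s2 := by
        rw [Fin.le_def]; omega
      have := hx ha1
      have := hx hb2
      linarith
    · omega
    · simp [hs1, hs2]; linarith

lemma aux_S_diff {d : ℕ} (y x : Fin d → ℝ) (a b : Fin d) (hab : a ≤ b) :
    ∑ s ∈ Finset.Icc a b, (x s - y s) = Spre y x ((b : ℕ) + 1) - Spre y x (a : ℕ) := by
  rw [Spre, Spre]
  have hsplit : Finset.univ.filter (fun s : Fin d => (s : ℕ) < (b : ℕ) + 1) =
      Finset.univ.filter (fun s : Fin d => (s : ℕ) < (a : ℕ)) ∪ Finset.Icc a b := by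
    ext s
    simp only [Finset.mem_filter, Finset.mem_univ, true_and, Finset.mem_union, Finset.mem_Icc,
      Fin.le_def]
    omega
  have hdisj : Disjoint (Finset.univ.filter (fun s : Fin d => (s : ℕ) < (a : ℕ))) (Finset.Icc a b) := by
    rw [Finset.disjoint_left]
    intro s hs hs2
    simp only [Finset.mem_filter, Finset.mem_univ, true_and] at hs
    rw [Finset.mem_Icc, Fin.le_def, Fin.le_def] at hs2
    omega
  rw [hsplit, Finset.sum_union hdisj]
  ring

theorem stmt17 {d : ℕ} (y x : Fin d → ℝ) (k : Fin d) (hk : (k : ℕ) + 1 < d)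
    (hstrict : ∀ (j : Fin d) (hj : (j : ℕ) + 1 < d), j ≠ k → y j < y ⟨(j : ℕ) + 1, hj⟩)
    (hviol : y ⟨(k : ℕ) + 1, hk⟩ ≤ y k)
    (hx : Monotone x)
    (hmin : ∀ v : Fin d → ℝ, Monotone v →
      ∑ i, (x i - y i)^2 ≤ ∑ i, (v i - y i)^2)
    (istar jstar : Fin d) (hik : istar ≤ k) (hkj : k < jstar)
    (hblock : ∀ i : Fin d, x i = x k ↔ (istar ≤ i ∧ i ≤ jstar))
    (J : Fin d → Fin d)
    (hJ : ∀ i : Fin d, i ≤ J i ∧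
      (∀ m : Fin d, i ≤ m →
        (∑ t ∈ Finset.Icc i (J i), y t) / ((Finset.Icc i (J i)).card : ℝ) ≤
          (∑ t ∈ Finset.Icc i m, y t) / ((Finset.Icc i m).card : ℝ)) ∧
      (∀ m : Fin d, i ≤ m →
        (∑ t ∈ Finset.Icc i m, y t) / ((Finset.Icc i m).card : ℝ) =
          (∑ t ∈ Finset.Icc i (J i), y t) / ((Finset.Icc i (J i)).card : ℝ) →
        m ≤ J i)) :
    ∀ i : Fin d, i ≤ k → ((i < istar → J i = i) ∧ (istar ≤ i → k < J i)) := by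
  set c := x k with hc
  have hij : istar ≤ jstar := le_trans hik hkj.le
  have hxblock : ∀ s : Fin d, istar ≤ s → s ≤ jstar → x s = c :=
    fun s h1 h2 => (hblock s).mpr ⟨h1, h2⟩
  have hxi : x istar = c := hxblock istar le_rfl hij
  have hxj : x jstar = c := hxblock jstar hij le_rfl
  -- Spre istar = 0
  have hS0 : Spre y x (istar : ℕ) = 0 := by
    rcases Nat.eq_zero_or_pos (istar : ℕ) with h0 | h0
    · rw [h0, Spre]
      apply Finset.sum_eq_zero
      intro s hs
      simp only [Finset.mem_filter] at hs
      omega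
    · have hplt : (istar : ℕ) - 1 < d := by omega
      set p : Fin d := ⟨(istar : ℕ) - 1, hplt⟩ with hp
      have hpk : p ≤ k := by
        rw [Fin.le_def]; rw [Fin.le_def] at hik; simp [hp]; omega
      have hpi : p ≤ istar := by
        rw [Fin.le_def]; simp [hp]; try omega
      have hxp : x p < x istar := by
        rcases lt_or_eq_of_le (hx hpi) with h | h
        · exact h
        · exfalso
          have : istar ≤ p := ((hblock p).mp (by rw [h, hxi])).1
          rw [Fin.le_def] at this; simp [hp] at this; omega
      exact aux_S_ascent y x hx hmin p istar (by simp [hp]; omega) hxp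
  -- Spre (jstar+1) = 0
  have hSj1 : Spre y x ((jstar : ℕ) + 1) = 0 := by
    rcases eq_or_lt_of_le (Nat.succ_le_of_lt jstar.isLt) with h0 | h0
    · rw [show (jstar : ℕ) + 1 = d by omega]
      exact aux_S_total y x hx hmin
    · set q : Fin d := ⟨(jstar : ℕ) + 1, h0⟩ with hq
      have hkq : k ≤ q := by
        rw [Fin.le_def]; rw [Fin.lt_def] at hkj; simp [hq]; omega
      have hxq : x jstar < x q := by
        rw [hxj]
        rcases lt_or_eq_of_le (hx hkq) with h | h
        · exact h
        · exfalso
          have : q ≤ jstar := ((hblock q).mp h.symm).2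
          rw [Fin.le_def] at this; simp [hq] at this
      have := aux_S_ascent y x hx hmin jstar q (by simp [hq]) hxq
      simpa [hq] using this
  -- pointwise identities
  have hsingle : ∀ t : Fin d, x t - y t = Spre y x ((t : ℕ) + 1) - Spre y x (t : ℕ) := by
    intro t
    have := aux_S_diff y x t t le_rfl
    rwa [Finset.Icc_self, Finset.sum_singleton] at this
  -- y t < c for t beyond jstar
  have hright : ∀ t : Fin d, (jstar : ℕ) < (t : ℕ) → c < y t := by
    intro t ht
    have hqlt : (jstar : ℕ) + 1 < d := by have := t.isLt; omega
    set q : Fin d := ⟨(jstar : ℕ) + 1, hqlt⟩ with hq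
    have hxq : c < x q := by
      have h1 : x k ≤ x q := hx (by rw [Fin.le_def]; rw [Fin.lt_def] at hkj; simp [hq]; omega)
      rcases lt_or_eq_of_le h1 with h | h
      · exact h
      · exfalso
        have : q ≤ jstar := ((hblock q).mp h.symm).2
        rw [Fin.le_def] at this; simp [hq] at this
    have hxyq : x q ≤ y q := by
      have h2 := hsingle q
      have h3 : Spre y x ((q : ℕ) + 1) ≤ 0 := aux_S_nonpos y x hx hmin _
      have h4 : Spre y x (q : ℕ) = 0 := by simpa [hq] using hSj1
      linarith
    have hqt : y q ≤ y t := by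
      apply aux_chain_le y k hstrict q t
      · rw [Fin.le_def]; simp [hq]; omega
      · right; rw [Fin.lt_def] at hkj; simp [hq]; omega
    linarith
  -- y t < c for t < istar
  have hleft : ∀ t : Fin d, (t : ℕ) < (istar : ℕ) → y t < c := by
    intro t ht
    have hplt : (istar : ℕ) - 1 < d := by omega
    set p : Fin d := ⟨(istar : ℕ) - 1, hplt⟩ with hp
    have hxp : x p < c := by
      have hpk : p ≤ k := by
        rw [Fin.le_def]; rw [Fin.le_def] at hik; simp [hp]; omega
      rcases lt_or_eq_of_le (hx hpk) with h | h
      · exact h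
      · exfalso
        have : istar ≤ p := ((hblock p).mp h).1
        rw [Fin.le_def] at this; simp [hp] at this; omega
    have hyxp : y p ≤ x p := by
      have h2 := hsingle p
      have h3 : Spre y x (p : ℕ) ≤ 0 := aux_S_nonpos y x hx hmin _
      have h4 : Spre y x ((p : ℕ) + 1) = 0 := by
        have : (p : ℕ) + 1 = (istar : ℕ) := by simp [hp]; omega
        rw [this]; exact hS0
      linarith
    have htp : y t ≤ y p := by
      apply aux_chain_le y k hstrict t p
      · rw [Fin.le_def]; simp [hp]; omega
      · left; rw [Fin.le_def] at hik; simp [hp]; omega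
    linarith
  -- F1 : suffix sums of block
  have hF1 : ∀ t : Fin d, istar ≤ t → t ≤ jstar →
      ∑ s ∈ Finset.Icc t jstar, y s ≤ ((Finset.Icc t jstar).card : ℝ) * c := by
    intro t h1 h2
    have hd := aux_S_diff y x t jstar h2
    have h3 : Spre y x (t : ℕ) ≤ 0 := aux_S_nonpos y x hx hmin _
    have h4 : 0 ≤ ∑ s ∈ Finset.Icc t jstar, (x s - y s) := by rw [hd, hSj1]; linarith
    have h5 : ∑ s ∈ Finset.Icc t jstar, x s = ((Finset.Icc t jstar).card : ℝ) * c := by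
      rw [Finset.sum_congr rfl (fun s hs => ?_), Finset.sum_const, nsmul_eq_mul]
      rw [Finset.mem_Icc] at hs
      exact hxblock s (le_trans h1 hs.1) hs.2
    rw [Finset.sum_sub_distrib, h5] at h4
    linarith
  -- F2 : prefix sums of block
  have hF2 : ∀ t : Fin d, istar ≤ t → t ≤ jstar →
      ((Finset.Icc istar t).card : ℝ) * c ≤ ∑ s ∈ Finset.Icc istar t, y s := by
    intro t h1 h2
    have hd := aux_S_diff y x istar t h1
    have h3 : Spre y x ((t : ℕ) + 1) ≤ 0 := aux_S_nonpos y x hx hmin _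
    have h4 : ∑ s ∈ Finset.Icc istar t, (x s - y s) ≤ 0 := by rw [hd, hS0]; linarith
    have h5 : ∑ s ∈ Finset.Icc istar t, x s = ((Finset.Icc istar t).card : ℝ) * c := by
      rw [Finset.sum_congr rfl (fun s hs => ?_), Finset.sum_const, nsmul_eq_mul]
      rw [Finset.mem_Icc] at hs
      exact hxblock s hs.1 (le_trans hs.2 h2)
    rw [Finset.sum_sub_distrib, h5] at h4
    linarith
  have hcyistar : c ≤ y istar := by
    have := hF2 istar le_rfl hij
    rwa [Finset.Icc_self, Finset.sum_singleton, Finset.card_singleton, Nat.cast_one, one_mul] at this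
  -- main
  intro i hikk
  constructor
  · -- Part A
    intro hi
    have him : i ≤ J i := (hJ i).1
    by_contra hne
    have hilt : i < J i := lt_of_le_of_ne him (fun h => hne h.symm)
    set m := J i with hm
    have havg := (hJ i).2.1 i le_rfl
    rw [Finset.Icc_self, Finset.sum_singleton, Finset.card_singleton, Nat.cast_one, div_one] at havg
    have hcard : (0 : ℝ) < ((Finset.Icc i m).card : ℝ) := by
      have : (Finset.Icc i m).Nonempty := Finset.nonempty_Icc.mpr him
      exact_mod_cast Finset.card_pos.mpr this
    have hsum_le : ∑ t ∈ Finset.Icc i m, y t ≤ ((Finset.Icc i m).card : ℝ) * y i := by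
      rw [div_le_iff₀ hcard] at havg
      linarith [havg]
    have hsum_gt : ((Finset.Icc i m).card : ℝ) * y i < ∑ t ∈ Finset.Icc i m, y t := by
      have key : 0 < ∑ t ∈ Finset.Icc i m, (y t - y i) := by
        rcases le_or_gt (m : ℕ) (k : ℕ) with hmk | hmk
        · -- entirely in increasing left half
          apply Finset.sum_pos'
          · intro t ht
            rw [Finset.mem_Icc] at ht
            have : y i ≤ y t := aux_chain_le y k hstrict i t ht.1
              (Or.inl (by rw [Fin.le_def] at ht; omega))
            linarith
          · exact ⟨m, Finset.mem_Icc.mpr ⟨him, le_rfl⟩, by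
              have : y i < y m := aux_chain_lt y k hstrict i m hilt (Or.inl hmk)
              linarith⟩
        · -- m beyond k
          set B := min m jstar with hB
          have hB1 : istar ≤ B := le_min
            (by rw [Fin.le_def]; rw [Fin.le_def] at hik; omega) hij
          have hB2 : B ≤ jstar := min_le_right _ _
          have hBm : B ≤ m := min_le_left _ _
          have hyic : y i < c := hleft i hi
          have hsub : Finset.Icc istar B ⊆ Finset.Icc i m := by
            intro t ht
            rw [Finset.mem_Icc] at ht ⊢
            exact ⟨le_trans hi.le ht.1, le_trans ht.2 hBm⟩
          have hnn : ∀ t ∈ Finset.Icc i m, t ∉ Finset.Icc istar B → 0 ≤ y t - y i := by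
            intro t ht htn
            rw [Finset.mem_Icc] at ht
            rw [Finset.mem_Icc, not_and_or] at htn
            rcases htn with h | h
            · -- t < istar
              have htlt : t < istar := not_le.mp h
              have : y i ≤ y t := aux_chain_le y k hstrict i t ht.1
                (Or.inl (by rw [Fin.lt_def] at htlt; rw [Fin.le_def] at hik; omega))
              linarith
            · -- B < t, so jstar < t
              have htB : B < t := not_le.mp h
              have hjt : (jstar : ℕ) < (t : ℕ) := by
                rcases le_or_gt m jstar with hmj | hmj
                · exfalso
                  have : B = m := min_eq_left hmj
                  rw [this] at htB
                  exact absurd ht.2 (not_le.mpr htB)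
                · have : B = jstar := min_eq_right hmj.le
                  rw [this] at htB
                  exact htB
              have := hright t hjt
              linarith
          have hmain : 0 < ∑ t ∈ Finset.Icc istar B, (y t - y i) := by
            have hcB : 0 < ((Finset.Icc istar B).card : ℝ) := by
              have : (Finset.Icc istar B).Nonempty := Finset.nonempty_Icc.mpr hB1
              exact_mod_cast Finset.card_pos.mpr this
            have h6 := hF2 B hB1 hB2
            have hyic : y i < c := hleft i hi
            have h7 : ∑ t ∈ Finset.Icc istar B, (y t - y i) =
                (∑ t ∈ Finset.Icc istar B, y t) - ((Finset.Icc istar B).card : ℝ) * y i := by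
              rw [Finset.sum_sub_distrib, Finset.sum_const, nsmul_eq_mul]
            rw [h7]
            nlinarith
          calc (0:ℝ) < ∑ t ∈ Finset.Icc istar B, (y t - y i) := hmain
          _ ≤ ∑ t ∈ Finset.Icc i m, (y t - y i) :=
            Finset.sum_le_sum_of_subset_of_nonneg hsub hnn
      have h8 : ∑ t ∈ Finset.Icc i m, (y t - y i) =
          (∑ t ∈ Finset.Icc i m, y t) - ((Finset.Icc i m).card : ℝ) * y i := by
        rw [Finset.sum_sub_distrib, Finset.sum_const, nsmul_eq_mul]
      rw [h8] at key
      linarith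
    linarith
  · -- Part B
    intro hi
    by_contra hc2
    have hmk : J i ≤ k := not_lt.mp hc2
    set m := J i with hm
    have him : i ≤ m := (hJ i).1
    have hij2 : i ≤ jstar := le_trans hikk hkj.le
    have h1 := (hJ i).2.1 jstar hij2
    have hcardm : (0 : ℝ) < ((Finset.Icc i m).card : ℝ) := by
      have : (Finset.Icc i m).Nonempty := Finset.nonempty_Icc.mpr him
      exact_mod_cast Finset.card_pos.mpr this
    have hcardj : (0 : ℝ) < ((Finset.Icc i jstar).card : ℝ) := by
      have : (Finset.Icc i jstar).Nonempty := Finset.nonempty_Icc.mpr hij2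
      exact_mod_cast Finset.card_pos.mpr this
    -- avg(i,jstar) ≤ c
    have h2 : (∑ t ∈ Finset.Icc i jstar, y t) / ((Finset.Icc i jstar).card : ℝ) ≤ c := by
      rw [div_le_iff₀ hcardj]
      have := hF1 i hi hij2
      linarith
    -- c ≤ y i
    have h3 : c ≤ y i := le_trans hcyistar
      (aux_chain_le y k hstrict istar i hi (Or.inl (by rw [Fin.le_def] at hikk; omega)))
    -- y i ≤ avg(i,m)
    have h4 : y i ≤ (∑ t ∈ Finset.Icc i m, y t) / ((Finset.Icc i m).card : ℝ) := by
      rw [le_div_iff₀ hcardm]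
      have h5 : ((Finset.Icc i m).card : ℝ) * y i = ∑ t ∈ Finset.Icc i m, y i := by
        rw [Finset.sum_const, nsmul_eq_mul]
      rw [mul_comm] at h5
      rw [h5]
      apply Finset.sum_le_sum
      intro t ht
      rw [Finset.mem_Icc] at ht
      apply aux_chain_le y k hstrict i t ht.1
      left
      have hmk' : (m : ℕ) ≤ (k : ℕ) := hmk
      have ht2 : (t : ℕ) ≤ (m : ℕ) := ht.2
      omega
    have heq : (∑ t ∈ Finset.Icc i jstar, y t) / ((Finset.Icc i jstar).card : ℝ) =
        (∑ t ∈ Finset.Icc i m, y t) / ((Finset.Icc i m).card : ℝ) := by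
      linarith
    have h6 := (hJ i).2.2 jstar hij2 heq
    rw [← hm] at h6
    exact absurd (lt_of_lt_of_le hkj h6) (not_lt.mpr hmk)
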